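/- Let S be an N×N Hermitian positive semidefinite complex matrix and H an N×N_e complex matrix, and set L = min(N_e, N). If tr(Hᴴ S H) ≤ Γ for some real Γ ≥ 0, then det(I + Hᴴ S H) ≤ (1 + Γ/L)^L. -/

import Mathlib

open Matrix ComplexOrder
open scoped MatrixOrder

private lemma amgm_aux (L : ℕ) (hL : 0 < L) (f : Fin L → ℝ) (hf : ∀ i, 0 ≤ f i) :
    (∏ i, (1 + f i)) ≤ (1 + (∑ i, f i) / L) ^ L := by
  have hL' : (0:ℝ) < L := Nat.cast_pos.mpr hL
  have hz : ∀ i ∈ Finset.univ, (0:ℝ) ≤ 1 + f i := fun i _ => by linarith [hf i]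
  have key := Real.geom_mean_le_arith_mean_weighted Finset.univ
      (fun _ => 1 / (L:ℝ)) (fun i => 1 + f i)
      (fun i _ => by positivity)
      (by simp [Finset.sum_const]; field_simp) hz
  have hprod : ∏ i, (1 + f i) ^ ((1:ℝ)/L) = (∏ i, (1 + f i)) ^ ((1:ℝ)/L) := by
    rw [← Real.finset_prod_rpow _ _ hz]
  have hsum : ∑ i : Fin L, 1/(L:ℝ) * (1 + f i) = 1 + (∑ i, f i) / L := by
    simp only [mul_add, Finset.sum_add_distrib, ← Finset.mul_sum, Finset.sum_const,
      Finset.card_univ, Fintype.card_fin, nsmul_eq_mul, mul_one]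
    field_simp
  rw [hprod, hsum] at key
  have hP : (0:ℝ) ≤ ∏ i, (1 + f i) := Finset.prod_nonneg hz
  calc ∏ i, (1 + f i) = ((∏ i, (1 + f i)) ^ ((1:ℝ)/L)) ^ L := by
        rw [← Real.rpow_natCast ((∏ i, (1 + f i)) ^ ((1:ℝ)/L)) L, ← Real.rpow_mul hP]
        rw [one_div, inv_mul_cancel₀ (ne_of_gt hL'), Real.rpow_one]
    _ ≤ (1 + (∑ i, f i) / L) ^ L := pow_le_pow_left₀ (Real.rpow_nonneg hP _) key L

private lemma det_trace_aux (L : ℕ) (M : Matrix (Fin L) (Fin L) ℂ) (hM : M.PosSemidef) :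
    ((1 + M).det = ∏ i, (1 + (hM.1.eigenvalues i : ℂ))) ∧
    (M.trace = ∑ i, (hM.1.eigenvalues i : ℂ)) := by
  have hH := hM.1
  set U : Matrix (Fin L) (Fin L) ℂ := (hH.eigenvectorUnitary : Matrix (Fin L) (Fin L) ℂ) with hUdef
  have hUU : U * star U = 1 := (Matrix.mem_unitaryGroup_iff).mp hH.eigenvectorUnitary.2
  have hUU' : star U * U = 1 := (Matrix.mem_unitaryGroup_iff').mp hH.eigenvectorUnitary.2
  constructor
  · conv_lhs => rw [hH.spectral_theorem, Unitary.conjStarAlgAut_apply, ← hUdef]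
    have h1 : (1 : Matrix (Fin L) (Fin L) ℂ) +
        U * diagonal (RCLike.ofReal ∘ hH.eigenvalues) * star U
        = U * (1 + diagonal (RCLike.ofReal ∘ hH.eigenvalues)) * star U := by
      rw [Matrix.mul_add, Matrix.add_mul, Matrix.mul_one, hUU]
    rw [h1, det_mul_right_comm, hUU, Matrix.one_mul]
    rw [← diagonal_one, diagonal_add, det_diagonal]
    simp [RCLike.ofReal]
  · conv_lhs => rw [hH.spectral_theorem, Unitary.conjStarAlgAut_apply, ← hUdef]
    rw [trace_mul_cycle, hUU', Matrix.one_mul, trace_diagonal]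
    simp [RCLike.ofReal]

private lemma key_aux (L : ℕ) (hL : 0 < L) (M : Matrix (Fin L) (Fin L) ℂ)
    (hM : M.PosSemidef) (Γ : ℝ) (hΓ : 0 ≤ Γ) (htr : M.trace.re ≤ Γ) :
    ((1 + M).det).re ≤ (1 + Γ / L) ^ L := by
  obtain ⟨hdet, htrace⟩ := det_trace_aux L M hM
  have hf : ∀ i, 0 ≤ hM.1.eigenvalues i := hM.eigenvalues_nonneg
  have hdet' : ((1 + M).det).re = ∏ i, (1 + hM.1.eigenvalues i) := by
    rw [hdet]
    have : (∏ i, (1 + (hM.1.eigenvalues i : ℂ))) = ((∏ i, (1 + hM.1.eigenvalues i) : ℝ) : ℂ) := by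
      push_cast; ring
    rw [this, Complex.ofReal_re]
  have htrace' : M.trace.re = ∑ i, hM.1.eigenvalues i := by
    rw [htrace]
    have : (∑ i, (hM.1.eigenvalues i : ℂ)) = ((∑ i, hM.1.eigenvalues i : ℝ) : ℂ) := by push_cast; ring
    rw [this, Complex.ofReal_re]
  rw [hdet']
  have hL' : (0:ℝ) < L := Nat.cast_pos.mpr hL
  have hsum : 0 ≤ ∑ i, hM.1.eigenvalues i := Finset.sum_nonneg fun i _ => hf i
  calc (∏ i, (1 + hM.1.eigenvalues i)) ≤ (1 + (∑ i, hM.1.eigenvalues i) / L) ^ L :=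
        amgm_aux L hL _ hf
    _ ≤ (1 + Γ / L) ^ L := by
        apply pow_le_pow_left₀ (by positivity)
        have : (∑ i, hM.1.eigenvalues i) ≤ Γ := htrace' ▸ htr
        gcongr

theorem stmt_7 (N Ne : ℕ) (hN : 0 < N) (hNe : 0 < Ne)
    (S : Matrix (Fin N) (Fin N) ℂ) (hS : S.PosSemidef)
    (H : Matrix (Fin N) (Fin Ne) ℂ) (Γ : ℝ) (hΓ : 0 ≤ Γ)
    (htr : ((H.conjTranspose * S * H).trace).re ≤ Γ) :
    ((1 + H.conjTranspose * S * H).det).re ≤ (1 + Γ / (min Ne N : ℝ)) ^ (min Ne N) := by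
  set B : Matrix (Fin N) (Fin Ne) ℂ := CFC.sqrt S * H with hBdef
  have hB : H.conjTranspose * S * H = B.conjTranspose * B := by
    rw [hBdef, conjTranspose_mul, (CFC.sqrt_nonneg S).posSemidef.1.eq]
    rw [Matrix.mul_assoc, Matrix.mul_assoc, ← Matrix.mul_assoc (CFC.sqrt S), CFC.sqrt_mul_sqrt_self S hS.nonneg,
      ← Matrix.mul_assoc]
  rcases le_or_gt Ne N with hle | hlt
  · rw [min_eq_left hle, min_eq_left (by exact_mod_cast hle : (Ne:ℝ) ≤ N), hB]
    rw [hB] at htr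
    exact key_aux Ne hNe _ (posSemidef_conjTranspose_mul_self B) Γ hΓ htr
  · rw [min_eq_right hlt.le, min_eq_right (by exact_mod_cast hlt.le : (N:ℝ) ≤ Ne), hB,
      det_one_add_mul_comm]
    rw [hB, trace_mul_comm] at htr
    exact key_aux N hN _ (posSemidef_self_mul_conjTranspose B) Γ hΓ htr
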